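/- Let G be a connected {2P₃, S₁,₂,₂}-free graph with efficient dominating set D, v ∈ D, and distance levels Nᵢ from v. If v is the midpoint of an induced P₃ (i.e., v has two non-adjacent neighbors), then the induced subgraph G[V \ ({v} ∪ N₁ ∪ N₂)] is P₃-free, i.e., a disjoint union of cliques. -/

import Mathlib

open SimpleGraph

/-- `D` is an efficient dominating set. -/
def IsEffDomSet {V : Type*} (G : SimpleGraph V) (D : Set V) : Prop :=
  ∀ u : V, ∃! d : V, d ∈ D ∧ (d = u ∨ G.Adj d u)

/-- `2P₃`: the disjoint union of two chordless paths on 3 vertices. -/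
def twoP3 : SimpleGraph (Fin 6) :=
  SimpleGraph.fromEdgeSet {s(0, 1), s(1, 2), s(3, 4), s(4, 5)}

/-- `S₁,₂,₂`: a chordless path 0-1-2-3-4 plus a vertex 5 adjacent only to 2. -/
def S122 : SimpleGraph (Fin 6) :=
  SimpleGraph.fromEdgeSet {s(0, 1), s(1, 2), s(2, 3), s(3, 4), s(2, 5)}

set_option maxHeartbeats 2000000 in
noncomputable def aux_twoP3_emb {V : Type*} (G : SimpleGraph V) (a b c x v y : V)
    (hab : G.Adj a b) (hbc : G.Adj b c) (hac : ¬ G.Adj a c)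
    (hvx : G.Adj v x) (hvy : G.Adj v y) (hxy : ¬ G.Adj x y)
    (hnxa : ¬ G.Adj x a) (hnxb : ¬ G.Adj x b) (hnxc : ¬ G.Adj x c)
    (hnya : ¬ G.Adj y a) (hnyb : ¬ G.Adj y b) (hnyc : ¬ G.Adj y c)
    (hnva : ¬ G.Adj v a) (hnvb : ¬ G.Adj v b) (hnvc : ¬ G.Adj v c)
    (hab' : a ≠ b) (hbc' : b ≠ c) (hac' : a ≠ c)
    (hav : a ≠ v) (hax : a ≠ x) (hay : a ≠ y)
    (hbv : b ≠ v) (hbx : b ≠ x) (hby : b ≠ y)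
    (hcv : c ≠ v) (hcx : c ≠ x) (hcy : c ≠ y)
    (hxy' : x ≠ y) : twoP3 ↪g G := by
  have hxv : x ≠ v := hvx.ne'
  have hnax : ¬ G.Adj a x := fun h => hnxa h.symm
  have hnbx : ¬ G.Adj b x := fun h => hnxb h.symm
  have hncx : ¬ G.Adj c x := fun h => hnxc h.symm
  have hnay : ¬ G.Adj a y := fun h => hnya h.symm
  have hnby : ¬ G.Adj b y := fun h => hnyb h.symm
  have hncy : ¬ G.Adj c y := fun h => hnyc h.symm
  have hnav : ¬ G.Adj a v := fun h => hnva h.symm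
  have hnbv : ¬ G.Adj b v := fun h => hnvb h.symm
  have hncv : ¬ G.Adj c v := fun h => hnvc h.symm
  have hnca : ¬ G.Adj c a := fun h => hac h.symm
  have hnyx : ¬ G.Adj y x := fun h => hxy h.symm
  have hxv' : G.Adj x v := hvx.symm
  have hyv' : G.Adj y v := hvy.symm
  have hba : G.Adj b a := hab.symm
  have hcb : G.Adj c b := hbc.symm
  have hyv : y ≠ v := hvy.ne'
  refine ⟨⟨![a, b, c, x, v, y], ?_⟩, ?_⟩
  · intro i j hij
    fin_cases i <;> fin_cases j <;> simp only [Matrix.cons_val', Matrix.cons_val_zero,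
      Matrix.cons_val_one, Matrix.head_cons, Matrix.head_fin_const, Matrix.cons_val_fin_one,
      Matrix.empty_val', Fin.isValue] at hij <;>
      first | rfl | exact absurd hij ‹_› | exact absurd hij.symm ‹_› | simp_all
  · intro i j
    show G.Adj (![a, b, c, x, v, y] i) (![a, b, c, x, v, y] j) ↔ twoP3.Adj i j
    fin_cases i <;> fin_cases j <;>
      simp [twoP3, Sym2.eq, Sym2.rel_iff', Matrix.cons_val_succ, hab, hbc, hac, hvx, hvy, hxy,
        hxv', hyv', hba, hcb, hnxa, hnxb, hnxc, hnya, hnyb, hnyc, hnva, hnvb, hnvc,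
        hnax, hnbx, hncx, hnay, hnby, hncy, hnav, hnbv, hncv, hnca, hnyx] <;>
      first | exact hnay | exact hnby | exact hncy | exact hxy | exact hvy
            | exact hnya | exact hnyb | exact hnyc | exact hnyx | exact hyv'

theorem stmt15 {V : Type*} [Fintype V] (G : SimpleGraph V) (hG : G.Connected)
    (h2P3free : IsEmpty (twoP3 ↪g G))
    (hSfree : IsEmpty (S122 ↪g G))
    (D : Set V) (hD : IsEffDomSet G D) (v : V) (hv : v ∈ D)
    -- v is the midpoint of an induced P₃: it has two non-adjacent neighbors
    (x y : V) (hvx : G.Adj v x) (hvy : G.Adj v y) (hxy : ¬ G.Adj x y) (hne : x ≠ y)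
    (R : Set V) (hR : R = Set.univ \ ({v} ∪ {w | G.dist v w = 1} ∪ {w | G.dist v w = 2})) :
    IsEmpty (SimpleGraph.pathGraph 3 ↪g G.induce R) := by
  constructor
  intro f
  -- a, b, c : the induced P3 in R
  set a : V := (f 0).1 with ha
  set b : V := (f 1).1 with hb
  set c : V := (f 2).1 with hc
  have hmemR : ∀ i : Fin 3, ((f i).1 : V) ∈ R := fun i => (f i).2
  -- distance ≥ 3 for members of R
  have hdist3 : ∀ w ∈ R, 3 ≤ G.dist v w := by
    intro w hw
    rw [hR] at hw
    obtain ⟨-, hw⟩ := hw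
    simp only [Set.mem_union, Set.mem_singleton_iff, Set.mem_setOf_eq, not_or] at hw
    obtain ⟨⟨h0, h1⟩, h2⟩ := hw
    have hpos : G.dist v w ≠ 0 := fun h => h0 (hG.dist_eq_zero_iff.mp h).symm
    omega
  -- neighbors of v (and v itself) are not adjacent to members of R
  have hclose : ∀ u : V, G.dist v u ≤ 1 → ∀ w ∈ R, ¬ G.Adj u w := by
    intro u hu w hw hadj
    have h1 : G.dist u w = 1 := dist_eq_one_iff_adj.mpr hadj
    have := hG.dist_triangle (u := v) (v := u) (w := w)
    have := hdist3 w hw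
    omega
  have hdvx : G.dist v x = 1 := dist_eq_one_iff_adj.mpr hvx
  have hdvy : G.dist v y = 1 := dist_eq_one_iff_adj.mpr hvy
  have hab : G.Adj a b :=
    (f.map_adj_iff (v := (0 : Fin 3)) (w := 1)).mpr (by simp [pathGraph_adj])
  have hbc : G.Adj b c :=
    (f.map_adj_iff (v := (1 : Fin 3)) (w := 2)).mpr (by simp [pathGraph_adj])
  have hac : ¬ G.Adj a c := fun h =>
    (by simp [pathGraph_adj] : ¬ (pathGraph 3).Adj 0 2)
      ((f.map_adj_iff (v := (0 : Fin 3)) (w := 2)).mp h)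
  have hfne : ∀ i j : Fin 3, i ≠ j → ((f i).1 : V) ≠ (f j).1 := by
    intro i j hij h
    exact hij (f.injective (Subtype.ext h))
  have hRv : ∀ w ∈ R, w ≠ v ∧ w ≠ x ∧ w ≠ y := by
    intro w hw
    have h3 := hdist3 w hw
    refine ⟨?_, ?_, ?_⟩ <;> rintro rfl
    · rw [hG.dist_eq_zero_iff.mpr rfl] at h3; omega
    · omega
    · omega
  obtain ⟨hav, hax, hay⟩ := hRv a (hmemR 0)
  obtain ⟨hbv, hbx, hby⟩ := hRv b (hmemR 1)
  obtain ⟨hcv, hcx, hcy⟩ := hRv c (hmemR 2)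
  have hab' : a ≠ b := hfne 0 1 (by decide)
  have hbc' : b ≠ c := hfne 1 2 (by decide)
  have hac' : a ≠ c := hfne 0 2 (by decide)
  have hnxa : ¬ G.Adj x a := hclose x hdvx.le a (hmemR 0)
  have hnxb : ¬ G.Adj x b := hclose x hdvx.le b (hmemR 1)
  have hnxc : ¬ G.Adj x c := hclose x hdvx.le c (hmemR 2)
  have hnya : ¬ G.Adj y a := hclose y hdvy.le a (hmemR 0)
  have hnyb : ¬ G.Adj y b := hclose y hdvy.le b (hmemR 1)
  have hnyc : ¬ G.Adj y c := hclose y hdvy.le c (hmemR 2)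
  have hnva : ¬ G.Adj v a := hclose v (by rw [SimpleGraph.dist_self]; exact Nat.zero_le 1) a (hmemR 0)
  have hnvb : ¬ G.Adj v b := hclose v (by rw [SimpleGraph.dist_self]; exact Nat.zero_le 1) b (hmemR 1)
  have hnvc : ¬ G.Adj v c := hclose v (by rw [SimpleGraph.dist_self]; exact Nat.zero_le 1) c (hmemR 2)
  exact h2P3free.false (aux_twoP3_emb G a b c x v y hab hbc hac hvx hvy hxy
    hnxa hnxb hnxc hnya hnyb hnyc hnva hnvb hnvc hab' hbc' hac'
    hav hax hay hbv hbx hby hcv hcx hcy hne)
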